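/- arXiv:1308.3133 — 7 statements merged into one kernel-verified Lean document; each statement's English description precedes it below -/
import Mathlib

section
/- If M is a positive integer not divisible by 3 and M ≡ 2 (mod 3), then the only element α of the 3-adic Cantor set Σ₃ with M·α also in Σ₃ is α = 0. -/
open scoped BigOperators

instance : Fact (Nat.Prime 3) := ⟨by norm_num⟩

/-- The 3-adic Cantor set: 3-adic integers all of whose digits are 0 or 1. -/
def Sigma3 : Set ℤ_[3] :=
  {x | ∃ a : ℕ → ℕ, (∀ n, a n ≤ 1) ∧ x = ∑' n : ℕ, (a n : ℤ_[3]) * 3 ^ n}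

lemma norm_three : ‖(3 : ℤ_[3])‖ = (3 : ℝ)⁻¹ := by
  have := @PadicInt.norm_p 3 ⟨by norm_num⟩
  simpa using this

lemma sigma3_summable (a : ℕ → ℕ) (ha : ∀ n, a n ≤ 1) :
    Summable (fun n : ℕ => (a n : ℤ_[3]) * 3 ^ n) := by
  apply Summable.of_norm_bounded (g := fun n => (3 : ℝ)⁻¹ ^ n)
    (summable_geometric_of_lt_one (by norm_num) (by norm_num))
  intro n
  calc ‖(a n : ℤ_[3]) * 3 ^ n‖ ≤ ‖((a n : ℤ_[3]))‖ * ‖(3 : ℤ_[3]) ^ n‖ := norm_mul_le _ _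
    _ ≤ 1 * ‖(3 : ℤ_[3]) ^ n‖ := by gcongr; exact PadicInt.norm_le_one _
    _ = (3 : ℝ)⁻¹ ^ n := by rw [one_mul, norm_pow, norm_three]

/-- Decomposition: an element of Σ₃ is c + 3y with c ∈ {0,1} and y ∈ Σ₃. -/
lemma sigma3_decomp {x : ℤ_[3]} (hx : x ∈ Sigma3) :
    ∃ c : ℕ, c ≤ 1 ∧ ∃ y ∈ Sigma3, x = (c : ℤ_[3]) + 3 * y := by
  obtain ⟨a, ha, rfl⟩ := hx
  refine ⟨a 0, ha 0, ∑' n : ℕ, (a (n + 1) : ℤ_[3]) * 3 ^ n,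
    ⟨fun n => a (n + 1), fun n => ha (n + 1), rfl⟩, ?_⟩
  have hs := sigma3_summable a ha
  have hs' := sigma3_summable (fun n => a (n + 1)) (fun n => ha (n + 1))
  rw [Summable.tsum_eq_zero_add hs]
  have : ∑' n : ℕ, (a (n + 1) : ℤ_[3]) * 3 ^ (n + 1)
      = ∑' n : ℕ, 3 * ((a (n + 1) : ℤ_[3]) * 3 ^ n) := by
    apply tsum_congr; intro n; ring
  simp only [pow_zero, mul_one, this, hs'.tsum_mul_left]

lemma sigma3_toZMod {x : ℤ_[3]} (hx : x ∈ Sigma3) :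
    PadicInt.toZMod x = 0 ∨ PadicInt.toZMod x = 1 := by
  obtain ⟨c, hc, y, hy, rfl⟩ := sigma3_decomp hx
  have h3 : (PadicInt.toZMod (3 : ℤ_[3]) : ZMod 3) = 0 := by
    have : ((3 : ℕ) : ℤ_[3]) = (3 : ℤ_[3]) := by norm_cast
    rw [← this, map_natCast]; decide
  interval_cases c <;>
    simp [map_add, map_mul, h3, map_natCast, map_one, map_zero]

lemma sigma3_div_three {x : ℤ_[3]} (hx : x ∈ Sigma3)
    (h0 : PadicInt.toZMod x = 0) : ∃ y ∈ Sigma3, x = 3 * y := by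
  obtain ⟨c, hc, y, hy, rfl⟩ := sigma3_decomp hx
  have h3 : (PadicInt.toZMod (3 : ℤ_[3]) : ZMod 3) = 0 := by
    have : ((3 : ℕ) : ℤ_[3]) = (3 : ℤ_[3]) := by norm_cast
    rw [← this, map_natCast]; decide
  have hc0 : c = 0 := by
    interval_cases c
    · rfl
    · exfalso
      simp [map_add, map_mul, h3, map_natCast] at h0
  subst hc0
  exact ⟨y, hy, by simp⟩

theorem C1M_eq_zero_of_two_mod_three (M : ℕ) (hM : 0 < M) (h3 : ¬ (3 ∣ M))
    (h2 : M % 3 = 2) :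
    {α : ℤ_[3] | α ∈ Sigma3 ∧ (M : ℤ_[3]) * α ∈ Sigma3} = {0} := by
  have hM3 : (M : ZMod 3) = 2 := by
    rw [← ZMod.natCast_mod M 3, h2]; rfl
  have key : ∀ n : ℕ, ∀ α : ℤ_[3], α ∈ Sigma3 → (M : ℤ_[3]) * α ∈ Sigma3 →
      (3 : ℤ_[3]) ^ n ∣ α := by
    intro n
    induction n with
    | zero => intro α _ _; simp
    | succ n ih =>
      intro α hα hMα
      -- first digit of α is 0
      have hzero : PadicInt.toZMod α = 0 := by
        rcases sigma3_toZMod hα with h | h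
        · exact h
        · exfalso
          have : PadicInt.toZMod ((M : ℤ_[3]) * α) = 2 := by
            rw [map_mul, map_natCast, h, mul_one, hM3]
          rcases sigma3_toZMod hMα with h' | h' <;> rw [this] at h' <;> exact absurd h' (by decide)
      obtain ⟨β, hβ, hαβ⟩ := sigma3_div_three hα hzero
      have h30 : (PadicInt.toZMod (3 : ℤ_[3]) : ZMod 3) = 0 := by
        have : ((3 : ℕ) : ℤ_[3]) = (3 : ℤ_[3]) := by norm_cast
        rw [← this, map_natCast]; decide
      have hMα0 : PadicInt.toZMod ((M : ℤ_[3]) * α) = 0 := by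
        rw [hαβ, map_mul, map_mul, h30]; ring
      obtain ⟨γ, hγ, hγeq⟩ := sigma3_div_three hMα hMα0
      have hγβ : γ = (M : ℤ_[3]) * β := by
        have h3ne : (3 : ℤ_[3]) ≠ 0 := by norm_num
        apply mul_left_cancel₀ h3ne
        rw [← hγeq, hαβ]; ring
      have := ih β hβ (hγβ ▸ hγ)
      rw [hαβ, pow_succ']
      exact mul_dvd_mul_left 3 this
  ext α
  simp only [Set.mem_setOf_eq, Set.mem_singleton_iff]
  constructor
  · rintro ⟨hα, hMα⟩
    have hnorm : ∀ n : ℕ, ‖α‖ ≤ (3 : ℝ)⁻¹ ^ n := by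
      intro n
      obtain ⟨β, rfl⟩ := key n α hα hMα
      calc ‖(3 : ℤ_[3]) ^ n * β‖ ≤ ‖(3 : ℤ_[3]) ^ n‖ * 1 := by
            refine (norm_mul_le _ _).trans ?_
            gcongr; exact PadicInt.norm_le_one _
        _ = (3 : ℝ)⁻¹ ^ n := by rw [norm_pow, norm_three, mul_one]
    have : ‖α‖ ≤ 0 := by
      refine ge_of_tendsto' (tendsto_pow_atTop_nhds_zero_of_lt_one (by norm_num) (by norm_num))
        hnorm
    simpa using le_antisymm this (norm_nonneg _)
  · rintro rfl
    refine ⟨⟨fun _ => 0, fun _ => le_refl _ |>.trans zero_le_one, by simp⟩, ?_⟩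
    exact ⟨fun _ => 0, fun _ => zero_le_one, by simp⟩
end

section
/- For all k ≥ 6, the unique real root β_k > 1 of λ^k − λ^{k−1} − 1 = 0 satisfies 1 + (log k)/k − 2(log log k)/k ≤ β_k ≤ 1 + (log k)/k. -/
private lemma log_nat_lb (m p q : ℕ) (h : 2 ^ p ≤ m ^ q) :
    (p : ℝ) * Real.log 2 ≤ (q : ℝ) * Real.log m := by
  have h0 : (0 : ℝ) < 2 ^ p := by positivity
  have hc : ((2 : ℝ)) ^ p ≤ ((m : ℝ)) ^ q := by exact_mod_cast h
  have := Real.log_le_log h0 hc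
  rwa [Real.log_pow, Real.log_pow] at this

private lemma log_nat_ub (m p q : ℕ) (hm : 0 < m) (h : m ^ q ≤ 2 ^ p) :
    (q : ℝ) * Real.log m ≤ (p : ℝ) * Real.log 2 := by
  have hm' : (0 : ℝ) < m := by exact_mod_cast hm
  have h0 : (0 : ℝ) < (m : ℝ) ^ q := by positivity
  have hc : ((m : ℝ)) ^ q ≤ ((2 : ℝ)) ^ p := by exact_mod_cast h
  have := Real.log_le_log h0 hc
  rwa [Real.log_pow, Real.log_pow] at this

private lemma log_lower_c4 (r c : ℝ) (hc : 0 < c) (h : 2 * c ^ 4 ≤ r) :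
    Real.log 2 + 4 * (1 - 1 / c) ≤ Real.log r := by
  have h1 : Real.log (2 * c ^ 4) ≤ Real.log r := Real.log_le_log (by positivity) h
  rw [Real.log_mul (by norm_num) (by positivity), Real.log_pow] at h1
  have h2 : 1 - c⁻¹ ≤ Real.log c := Real.one_sub_inv_le_log_of_pos hc
  have h3 : (1 : ℝ) / c = c⁻¹ := one_div c
  push_cast at h1
  linarith

private lemma key_interval (k : ℕ) (a b ra rb s : ℝ) (ha : 0 < a)
    (hka : a ≤ (k : ℝ)) (hkb : (k : ℝ) ≤ b)
    (hra : ra ≤ Real.log a) (hrb : Real.log b ≤ rb)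
    (hs : s ≤ Real.log ra) (hra0 : 0 < ra) (hs0 : 0 < s)
    (hcheck : rb * (rb + 1) ≤ (a + ra) * s) :
    Real.log k * (Real.log k + 1) ≤ ((k : ℝ) + Real.log k) * Real.log (Real.log k) := by
  have hL1 : ra ≤ Real.log k := hra.trans (Real.log_le_log ha hka)
  have hL2 : Real.log k ≤ rb := (Real.log_le_log (ha.trans_le hka) hkb).trans hrb
  have hL3 : s ≤ Real.log (Real.log k) := hs.trans (Real.log_le_log hra0 hL1)
  have hL0 : 0 < Real.log k := hra0.trans_le hL1
  have h4 : (a + ra) * s ≤ ((k : ℝ) + Real.log k) * Real.log (Real.log k) :=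
    mul_le_mul (by linarith) hL3 hs0.le (by linarith)
  nlinarith [hL0.le, hL2, hcheck, h4, mul_le_mul hL2 hL2 hL0.le (by linarith : (0:ℝ) ≤ rb)]

private lemma key (k : ℕ) (hk : 7 ≤ k) :
    Real.log k * (Real.log k + 1) ≤ ((k : ℝ) + Real.log k) * Real.log (Real.log k) := by
  have hk7 : (7 : ℝ) ≤ (k : ℝ) := by exact_mod_cast hk
  by_cases h7 : k = 7
  · refine key_interval k 7 7 1.94081 1.94775 0.6629 (by norm_num) (by exact_mod_cast hk)
      (by rw [h7]; norm_num) ?_ ?_ ?_ (by norm_num) (by norm_num) (by norm_num)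
    · have := log_nat_lb 7 14 5 (by norm_num)
      push_cast at this
      linarith [Real.log_two_gt_d9]
    · have := log_nat_ub 7 281 100 (by norm_num) (Nat.le_of_ble_eq_true rfl)
      push_cast at this
      linarith [Real.log_two_lt_d9]
    · have := log_lower_c4 1.94081 0.99251 (by norm_num) (by norm_num)
      linarith [Real.log_two_gt_d9]
  by_cases h9 : k ≤ 9
  · refine key_interval k 8 9 2.0794415 2.19728 0.7317 (by norm_num)
      (by exact_mod_cast show 8 ≤ k by omega) (by exact_mod_cast h9) ?_ ?_ ?_
      (by norm_num) (by norm_num) (by norm_num)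
    · have := log_nat_lb 8 3 1 (by norm_num)
      push_cast at this
      linarith [Real.log_two_gt_d9]
    · have := log_nat_ub 9 317 100 (by norm_num) (Nat.le_of_ble_eq_true rfl)
      push_cast at this
      linarith [Real.log_two_lt_d9]
    · have := log_lower_c4 2.0794415 1.00974 (by norm_num) (by norm_num)
      linarith [Real.log_two_gt_d9]
  by_cases h15 : k ≤ 15
  · refine key_interval k 10 15 2.3012486 2.70882 0.8306 (by norm_num)
      (by exact_mod_cast show 10 ≤ k by omega) (by exact_mod_cast h15) ?_ ?_ ?_
      (by norm_num) (by norm_num) (by norm_num)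
    · have := log_nat_lb 10 83 25 (by norm_num)
      push_cast at this
      linarith [Real.log_two_gt_d9]
    · have := log_nat_ub 15 977 250 (by norm_num) (by decide +kernel)
      push_cast at this
      linarith [Real.log_two_lt_d9]
    · have := log_lower_c4 2.3012486 1.0356 (by norm_num) (by norm_num)
      linarith [Real.log_two_gt_d9]
  by_cases h47 : k ≤ 47
  · refine key_interval k 16 47 2.7725887 3.85044 1.00651 (by norm_num)
      (by exact_mod_cast show 16 ≤ k by omega) (by exact_mod_cast h47) ?_ ?_ ?_
      (by norm_num) (by norm_num) (by norm_num)
    · have := log_nat_lb 16 4 1 (by norm_num)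
      push_cast at this
      linarith [Real.log_two_gt_d9]
    · have := log_nat_ub 47 1111 200 (by norm_num) (by decide +kernel)
      push_cast at this
      linarith [Real.log_two_lt_d9]
    · have := log_lower_c4 2.7725887 1.085 (by norm_num) (by norm_num)
      linarith [Real.log_two_gt_d9]
  by_cases h2047 : k ≤ 2047
  · refine key_interval k 48 2047 3.8677612 7.624619 1.30044 (by norm_num)
      (by exact_mod_cast show 48 ≤ k by omega) (by exact_mod_cast h2047) ?_ ?_ ?_
      (by norm_num) (by norm_num) (by norm_num)
    · have := log_nat_lb 48 279 50 (Nat.le_of_ble_eq_true rfl)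
      push_cast at this
      linarith [Real.log_two_gt_d9]
    · have := log_nat_ub 2047 11 1 (by norm_num) (by norm_num)
      push_cast at this
      linarith [Real.log_two_lt_d9]
    · have := log_lower_c4 3.8677612 1.179 (by norm_num) (by norm_num)
      linarith [Real.log_two_gt_d9]
  -- tail : k ≥ 2048
  push_neg at h2047
  have h2048 : (2048 : ℝ) ≤ (k : ℝ) := by exact_mod_cast h2047
  have hk0 : (0 : ℝ) < (k : ℝ) := by linarith
  have hL : (7.6246 : ℝ) ≤ Real.log k := by
    have h1 : Real.log 2048 ≤ Real.log k := Real.log_le_log (by norm_num) h2048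
    have h2 : Real.log (2048 : ℝ) = 11 * Real.log 2 := by
      rw [show (2048 : ℝ) = 2 ^ 11 by norm_num, Real.log_pow]
      push_cast; ring
    linarith [Real.log_two_gt_d9]
  have hL0 : (0 : ℝ) ≤ Real.log k := by linarith
  have hMl : 1 ≤ Real.log (Real.log k) := by
    have he : Real.exp 1 ≤ Real.log k := by linarith [Real.exp_one_lt_d9]
    have := Real.log_le_log (Real.exp_pos 1) he
    rwa [Real.log_exp] at this
  set s := (k : ℝ) ^ ((1 : ℝ) / 4) with hs_def
  have hs0 : 0 < s := Real.rpow_pos_of_pos hk0 _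
  have hs4 : s ^ (4 : ℕ) = (k : ℝ) := by
    rw [hs_def, ← Real.rpow_natCast ((k : ℝ) ^ ((1 : ℝ) / 4)) 4, ← Real.rpow_mul hk0.le]
    norm_num
  have hs6 : 6 ≤ s := by
    by_contra hc
    push_neg at hc
    have h36 : s * s < 36 := by nlinarith
    have hlt : s ^ (4 : ℕ) < 1296 := by nlinarith [mul_pos hs0 hs0]
    rw [hs4] at hlt
    linarith
  have hlogs : Real.log k = 4 * Real.log s := by
    rw [← hs4, Real.log_pow]; push_cast; ring
  have hLs : Real.log k ≤ 4 * s := by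
    have := Real.log_le_sub_one_of_pos hs0
    linarith
  have h16 : 16 * s ^ 2 + 4 * s ≤ s ^ (4 : ℕ) := by
    have hss : 36 ≤ s ^ 2 := by nlinarith
    nlinarith [mul_nonneg (by linarith : (0:ℝ) ≤ s ^ 2 - 36) (sq_nonneg s),
      mul_nonneg (by linarith : (0:ℝ) ≤ 4 * s) (by linarith : (0:ℝ) ≤ 5 * s - 1)]
  have hk' : Real.log k * (Real.log k + 1) ≤ (k : ℝ) := by
    nlinarith [hLs, hL0, h16, hs0, hs4, mul_nonneg (by linarith : (0:ℝ) ≤ 4 * s - Real.log k)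
      (by linarith : (0:ℝ) ≤ 4 * s + 1 + Real.log k)]
  nlinarith [hk', mul_nonneg (by linarith : (0:ℝ) ≤ (k : ℝ) + Real.log k)
    (by linarith : (0:ℝ) ≤ Real.log (Real.log k) - 1)]

private lemma upper_aux (m : ℕ) (hm : m ≠ 0) (β x : ℝ) (hβ : 1 < β) (hx : 1 < x)
    (h1 : β ^ m * (β - 1) = 1) (h2 : 1 ≤ x ^ m * (x - 1)) : β ≤ x := by
  by_contra hlt
  push_neg at hlt
  have hxm : x ^ m < β ^ m := pow_lt_pow_left₀ hlt (by linarith) hm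
  have hxp : 0 < x ^ m := pow_pos (by linarith) m
  nlinarith [mul_pos (sub_pos.2 hxm) (show (0:ℝ) < x - 1 by linarith),
    mul_pos (hxp.trans hxm) (show (0:ℝ) < β - x by linarith)]

private lemma lower_aux (m : ℕ) (hm : m ≠ 0) (β x : ℝ) (hβ : 1 < β) (hx : 1 < x)
    (h1 : β ^ m * (β - 1) = 1) (h2 : x ^ m * (x - 1) ≤ 1) : x ≤ β := by
  by_contra hlt
  push_neg at hlt
  have hxm : β ^ m < x ^ m := pow_lt_pow_left₀ hlt (by linarith) hm
  have hxp : 0 < β ^ m := pow_pos (by linarith) m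
  nlinarith [mul_pos (sub_pos.2 hxm) (show (0:ℝ) < β - 1 by linarith),
    mul_pos (hxp.trans hxm) (show (0:ℝ) < x - β by linarith)]

theorem root_estimates (k : ℕ) (hk : 6 ≤ k) (β : ℝ) (hβ : 1 < β)
    (hroot : β ^ k - β ^ (k - 1) - 1 = 0) :
    1 + Real.log k / k - 2 * Real.log (Real.log k) / k ≤ β ∧
      β ≤ 1 + Real.log k / k := by
  have hk6 : (6 : ℝ) ≤ (k : ℝ) := by exact_mod_cast hk
  have hk0 : (0 : ℝ) < (k : ℝ) := by linarith
  have hmne : k - 1 ≠ 0 := by omega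
  have hcast : ((k - 1 : ℕ) : ℝ) = (k : ℝ) - 1 := by
    rw [Nat.cast_sub (by omega)]; norm_num
  have h1 : β ^ (k - 1) * (β - 1) = 1 := by
    have e : β ^ k = β ^ (k - 1) * β := by
      rw [← pow_succ, show k - 1 + 1 = k by omega]
    linear_combination hroot - e
  have h6lb : (1.7823 : ℝ) ≤ Real.log 6 := by
    have := log_nat_lb 6 18 7 (by norm_num)
    push_cast at this
    linarith [Real.log_two_gt_d9]
  have hL6 : Real.log 6 ≤ Real.log k := Real.log_le_log (by norm_num) hk6
  have hL1 : (1 : ℝ) ≤ Real.log k := by linarith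
  have hL0 : (0 : ℝ) < Real.log k := by linarith
  constructor
  · -- lower bound
    set x : ℝ := 1 + Real.log k / k - 2 * Real.log (Real.log k) / k with hx_def
    rcases le_or_gt x 1 with hx1 | hx1
    · linarith
    · refine lower_aux (k - 1) hmne β x hβ hx1 h1 ?_
      have hM0 : 0 ≤ Real.log (Real.log k) := Real.log_nonneg hL1
      have hy0 : 0 < x - 1 := by linarith
      have hky : (k : ℝ) * (x - 1) = Real.log k - 2 * Real.log (Real.log k) := by
        rw [hx_def]; field_simp; ring
      have hxle : x ≤ Real.exp (x - 1) := by
        have := Real.add_one_le_exp (x - 1); linarith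
      have hxm : x ^ (k - 1) ≤ Real.exp (x - 1) ^ (k - 1) :=
        pow_le_pow_left₀ (by linarith) hxle _
      rw [← Real.exp_nat_mul] at hxm
      have hmono : Real.exp (((k - 1 : ℕ) : ℝ) * (x - 1)) ≤ Real.exp ((k : ℝ) * (x - 1)) := by
        apply Real.exp_le_exp.2
        rw [hcast]
        nlinarith [hy0]
      have hval : Real.exp ((k : ℝ) * (x - 1)) = (k : ℝ) / (Real.log k * Real.log k) := by
        rw [hky, show Real.log k - 2 * Real.log (Real.log k)
            = Real.log k - Real.log (Real.log k) - Real.log (Real.log k) by ring,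
          Real.exp_sub, Real.exp_sub, Real.exp_log hk0, Real.exp_log hL0, div_div]
      have hxm2 : x ^ (k - 1) ≤ (k : ℝ) / (Real.log k * Real.log k) := by
        rw [← hval]; exact hxm.trans hmono
      have hfin : (k : ℝ) / (Real.log k * Real.log k) * (x - 1) ≤ 1 := by
        rw [div_mul_eq_mul_div, hky, div_le_one (by positivity)]
        nlinarith [hM0, hL1]
      calc x ^ (k - 1) * (x - 1)
          ≤ (k : ℝ) / (Real.log k * Real.log k) * (x - 1) :=
            mul_le_mul_of_nonneg_right hxm2 hy0.le
        _ ≤ 1 := hfin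
  · -- upper bound
    set a : ℝ := 1 + Real.log k / k with ha_def
    have ha1 : 1 < a := by
      have : 0 < Real.log k / k := div_pos hL0 hk0
      simp only [ha_def]; linarith
    have ham1 : a - 1 = Real.log k / k := by rw [ha_def]; ring
    refine upper_aux (k - 1) hmne β a hβ ha1 h1 ?_
    by_cases hk6' : k = 6
    · subst hk6'
      have h175 : (1.75 : ℝ) ≤ Real.log 6 := by linarith
      have ha31 : (31 / 24 : ℝ) ≤ a := by
        rw [ha_def]
        have : (6 : ℕ) = (6 : ℕ) := rfl
        push_cast
        linarith
      have h5 : (31 / 24 : ℝ) ^ 5 ≤ a ^ 5 := pow_le_pow_left₀ (by norm_num) ha31 5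
      have hgoal : (1 : ℝ) ≤ a ^ 5 * (a - 1) := by
        have h7 : (7 / 24 : ℝ) ≤ a - 1 := by linarith
        calc (1 : ℝ) ≤ (31 / 24 : ℝ) ^ 5 * (7 / 24) := by norm_num
          _ ≤ a ^ 5 * (a - 1) := by
              apply mul_le_mul h5 h7 (by norm_num) (by positivity)
      simpa using hgoal
    · have hk7 : 7 ≤ k := by omega
      have hkey := key k hk7
      have hkL : (0 : ℝ) < (k : ℝ) + Real.log k := by linarith
      have hla : Real.log k / ((k : ℝ) + Real.log k) ≤ Real.log a := by
        have hinv : 1 - a⁻¹ = Real.log k / ((k : ℝ) + Real.log k) := by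
          rw [ha_def]
          field_simp
          ring
        rw [← hinv]
        exact Real.one_sub_inv_le_log_of_pos (by linarith)
      have h2 : Real.log k - Real.log (Real.log k)
          ≤ ((k : ℝ) - 1) * (Real.log k / ((k : ℝ) + Real.log k)) := by
        rw [mul_div_assoc', le_div_iff₀ hkL]
        nlinarith [hkey]
      have h3 : Real.log k - Real.log (Real.log k) ≤ ((k : ℝ) - 1) * Real.log a := by
        have := mul_le_mul_of_nonneg_left hla (by linarith : (0 : ℝ) ≤ (k : ℝ) - 1)
        linarith
      have h5 : a ^ (k - 1) = Real.exp (((k - 1 : ℕ) : ℝ) * Real.log a) := by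
        rw [Real.exp_nat_mul, Real.exp_log (by linarith : (0:ℝ) < a)]
      have h6 : Real.exp (Real.log k - Real.log (Real.log k)) ≤ a ^ (k - 1) := by
        rw [h5, hcast]
        exact Real.exp_le_exp.2 h3
      have h7 : Real.exp (Real.log k - Real.log (Real.log k)) = (k : ℝ) / Real.log k := by
        rw [Real.exp_sub, Real.exp_log hk0, Real.exp_log hL0]
      rw [h7] at h6
      have h8 : (1 : ℝ) = (k : ℝ) / Real.log k * (Real.log k / k) := by
        field_simp
      rw [ham1, h8]
      exact mul_le_mul_of_nonneg_right h6 (by positivity)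
end

section
/- Let A be the 2^k × 2^k matrix with a_{ij} = 1 if 1 ≤ i ≤ 2^{k−1} and j ∈ {2i−1, 2i}, a_{ij} = 1 if i > 2^{k−1} and j = 2(i−2^{k−1})−1, and 0 otherwise. Then the golden ratio (1+√5)/2 is an eigenvalue of A with a strictly positive eigenvector, hence (1+√5)/2 equals the spectral radius of A. -/
/-- The golden ratio. -/
noncomputable def phi : ℝ := (1 + Real.sqrt 5) / 2

/-- The `2^k × 2^k` 0-1 matrix `A_k` (0-indexed version of the 1-indexed
description: `a_{ij} = 1` iff `i ≤ 2^{k-1}` and `j ∈ {2i-1, 2i}`, or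
`i > 2^{k-1}` and `j = 2(i - 2^{k-1}) - 1`). -/
def goldMat (k : ℕ) : Matrix (Fin (2 ^ k)) (Fin (2 ^ k)) ℝ := fun i j =>
  if ((i : ℕ) < 2 ^ (k - 1) ∧ ((j : ℕ) = 2 * (i : ℕ) ∨ (j : ℕ) = 2 * (i : ℕ) + 1)) ∨
      (2 ^ (k - 1) ≤ (i : ℕ) ∧ (j : ℕ) = 2 * ((i : ℕ) - 2 ^ (k - 1))) then 1 else 0

/-! ### Auxiliary facts about `phi` -/

lemma phi_pos : 0 < phi := by
  unfold phi
  have := Real.sqrt_nonneg 5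
  linarith

lemma phi_ne_zero : phi ≠ 0 := ne_of_gt phi_pos

lemma phi_sq : phi ^ 2 = phi + 1 := by
  unfold phi
  have h5 : Real.sqrt 5 ^ 2 = 5 := Real.sq_sqrt (by norm_num)
  nlinarith [h5]

lemma phi_zpow_succ (t : ℤ) : phi ^ (t + 1) = phi ^ t + phi ^ (t - 1) := by
  have h : phi ^ (t + 1) = phi ^ (t - 1) * phi ^ (2 : ℤ) := by
    rw [← zpow_add₀ phi_ne_zero]; ring_nf
  rw [h]
  have h2 : phi ^ (2 : ℤ) = phi + 1 := by
    rw [show (2 : ℤ) = (2 : ℕ) from rfl, zpow_natCast, phi_sq]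
  rw [h2, mul_add, mul_one, ← zpow_add_one₀ phi_ne_zero]
  ring_nf

/-! ### Bit count -/

/-- Number of `1` bits. -/
def pc (n : ℕ) : ℕ := n.bits.count true

lemma phi_zpow_eq (t : ℤ) : phi ^ t + phi ^ (t - 1) = phi * phi ^ t := by
  have h := phi_zpow_succ t
  rw [zpow_add_one₀ phi_ne_zero] at h
  rw [← h]; ring

lemma phi_zpow_eq' (t : ℤ) : phi ^ t = phi * phi ^ (t - 1) := by
  have h : phi ^ t = phi ^ (t - 1) * phi := by
    rw [← zpow_add_one₀ phi_ne_zero]; congr 1; ring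
  rw [h]; ring

lemma pc_zero : pc 0 = 0 := by simp [pc]

lemma pc_two_mul (n : ℕ) : pc (2 * n) = pc n := by
  rcases eq_or_ne n 0 with rfl | h
  · simp
  · simp [pc, Nat.bit0_bits n h]

lemma pc_two_mul_add_one (n : ℕ) : pc (2 * n + 1) = pc n + 1 := by
  simp [pc, Nat.bit1_bits n]

lemma pc_pow_add : ∀ m r : ℕ, r < 2 ^ m → pc (2 ^ m + r) = pc r + 1 := by
  intro m
  induction m with
  | zero =>
    intro r hr
    interval_cases r
    simpa using pc_two_mul_add_one 0
  | succ m ih =>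
    intro r hr
    have hq : r / 2 < 2 ^ m := by
      apply Nat.div_lt_of_lt_mul
      rw [pow_succ] at hr; omega
    have hr2 : r % 2 = 0 ∨ r % 2 = 1 := Nat.mod_two_eq_zero_or_one r
    have hsplit : r = 2 * (r / 2) + r % 2 := (Nat.div_add_mod r 2).symm ▸ by omega
    have key : 2 ^ (m + 1) + r = 2 * (2 ^ m + r / 2) + r % 2 := by
      rw [pow_succ]; omega
    rcases hr2 with h2 | h2
    · have heq : r = 2 * (r / 2) := by omega
      have h3 : pc r = pc (r / 2) := by
        conv_lhs => rw [heq]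
        rw [pc_two_mul]
      rw [key, h2, Nat.add_zero, pc_two_mul, ih _ hq, h3]
    · have heq : r = 2 * (r / 2) + 1 := by omega
      have h3 : pc r = pc (r / 2) + 1 := by
        conv_lhs => rw [heq]
        rw [pc_two_mul_add_one]
      rw [key, h2, pc_two_mul_add_one, ih _ hq, h3]

/-! ### Charpoly roots vs eigenvectors -/

lemma charpoly_eval {n : Type*} [Fintype n] [DecidableEq n] {K : Type*} [Field K]
    (M : Matrix n n K) (μ : K) :
    M.charpoly.eval μ = (μ • (1 : Matrix n n K) - M).det := by
  rw [Matrix.charpoly, ← Polynomial.coe_evalRingHom, RingHom.map_det]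
  congr 1
  ext i j
  by_cases h : i = j
  · subst h
    simp [Matrix.charmatrix_apply_eq, Matrix.one_apply]
  · simp [Matrix.charmatrix_apply_ne _ _ _ h, Matrix.one_apply_ne h]

lemma charpoly_root_iff {n : Type*} [Fintype n] [DecidableEq n] {K : Type*} [Field K]
    (M : Matrix n n K) (μ : K) :
    M.charpoly.IsRoot μ ↔ ∃ v, v ≠ 0 ∧ M.mulVec v = μ • v := by
  rw [Polynomial.IsRoot, charpoly_eval, ← Matrix.exists_mulVec_eq_zero_iff]
  constructor
  · rintro ⟨v, hv, hmv⟩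
    refine ⟨v, hv, ?_⟩
    rw [Matrix.sub_mulVec, Matrix.smul_mulVec, Matrix.one_mulVec, sub_eq_zero] at hmv
    exact hmv.symm
  · rintro ⟨v, hv, hmv⟩
    refine ⟨v, hv, ?_⟩
    rw [Matrix.sub_mulVec, Matrix.smul_mulVec, Matrix.one_mulVec, sub_eq_zero, hmv]

lemma goldMat_nonneg (k : ℕ) (i j : Fin (2 ^ k)) : 0 ≤ goldMat k i j := by
  unfold goldMat; split <;> norm_num

/-! ### The eigenvector -/

noncomputable def gvec (k : ℕ) : Fin (2 ^ k) → ℝ := fun i => phi ^ ((k : ℤ) - pc (i : ℕ))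

lemma gvec_pos (k : ℕ) (i : Fin (2 ^ k)) : 0 < gvec k i := zpow_pos phi_pos _

lemma goldMat_mulVec (k : ℕ) (hk : 1 ≤ k) :
    (goldMat k).mulVec (gvec k) = phi • gvec k := by
  have h2k : 2 ^ k = 2 * 2 ^ (k - 1) := by
    rw [← pow_succ']
    congr 1
    omega
  funext i
  rw [Matrix.mulVec, dotProduct]
  by_cases hi : (i : ℕ) < 2 ^ (k - 1)
  · -- two children
    have hb1 : 2 * (i : ℕ) < 2 ^ k := by omega
    have hb2 : 2 * (i : ℕ) + 1 < 2 ^ k := by omega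
    set j1 : Fin (2 ^ k) := ⟨2 * (i : ℕ), hb1⟩
    set j2 : Fin (2 ^ k) := ⟨2 * (i : ℕ) + 1, hb2⟩
    have hne : j1 ≠ j2 := by
      intro h
      have := congrArg (Fin.val) h
      simp [j1, j2] at this
    have hterm : ∀ j, goldMat k i j * gvec k j =
        (if j = j1 then gvec k j1 else 0) + (if j = j2 then gvec k j2 else 0) := by
      intro j
      unfold goldMat
      by_cases h1 : j = j1
      · subst h1
        rw [if_pos (Or.inl ⟨hi, Or.inl rfl⟩), if_pos rfl, if_neg hne]
        ring
      · by_cases h2 : j = j2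
        · subst h2
          rw [if_pos (Or.inl ⟨hi, Or.inr rfl⟩), if_pos rfl, if_neg (Ne.symm hne)]
          ring
        · rw [if_neg, if_neg h1, if_neg h2]
          · ring
          · rintro (⟨-, hj | hj⟩ | ⟨hge, -⟩)
            · exact h1 (Fin.ext hj)
            · exact h2 (Fin.ext hj)
            · omega
    rw [Finset.sum_congr rfl fun j _ => hterm j, Finset.sum_add_distrib,
      Finset.sum_ite_eq' Finset.univ j1, Finset.sum_ite_eq' Finset.univ j2]
    simp only [Finset.mem_univ, if_true]
    -- now arithmetic
    have hp1 : pc (j1 : ℕ) = pc (i : ℕ) := pc_two_mul _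
    have hp2 : pc (j2 : ℕ) = pc (i : ℕ) + 1 := pc_two_mul_add_one _
    show gvec k j1 + gvec k j2 = phi * gvec k i
    unfold gvec
    rw [hp1, hp2]
    push_cast
    rw [show (k : ℤ) - ((pc (i : ℕ) : ℤ) + 1) = ((k : ℤ) - pc (i : ℕ)) - 1 by ring]
    exact phi_zpow_eq _
  · -- one child
    push_neg at hi
    have hI : (i : ℕ) < 2 ^ k := i.isLt
    have hb0 : 2 * ((i : ℕ) - 2 ^ (k - 1)) < 2 ^ k := by omega
    set j0 : Fin (2 ^ k) := ⟨2 * ((i : ℕ) - 2 ^ (k - 1)), hb0⟩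
    have hterm : ∀ j, goldMat k i j * gvec k j = (if j = j0 then gvec k j0 else 0) := by
      intro j
      unfold goldMat
      by_cases h0 : j = j0
      · subst h0
        rw [if_pos (Or.inr ⟨hi, rfl⟩), if_pos rfl]
        ring
      · rw [if_neg, if_neg h0]
        · ring
        · rintro (⟨hlt, -⟩ | ⟨-, hj⟩)
          · omega
          · exact h0 (Fin.ext hj)
    rw [Finset.sum_congr rfl fun j _ => hterm j, Finset.sum_ite_eq' Finset.univ j0]
    simp only [Finset.mem_univ, if_true]
    show gvec k j0 = phi * gvec k i
    have hpi : pc (i : ℕ) = pc ((i : ℕ) - 2 ^ (k - 1)) + 1 := by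
      have heq : (i : ℕ) = 2 ^ (k - 1) + ((i : ℕ) - 2 ^ (k - 1)) := by omega
      conv_lhs => rw [heq]
      rw [pc_pow_add _ _ (by omega)]
    have hpj : pc (j0 : ℕ) = pc ((i : ℕ) - 2 ^ (k - 1)) := pc_two_mul _
    unfold gvec
    rw [hpi, hpj]
    push_cast
    rw [show (k : ℤ) - ((pc ((i : ℕ) - 2 ^ (k - 1)) : ℤ) + 1)
        = ((k : ℤ) - pc ((i : ℕ) - 2 ^ (k - 1))) - 1 by ring]
    exact phi_zpow_eq' _

/-- The golden ratio is an eigenvalue of `A_k` with a strictly positive eigenvector,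
and it equals the spectral radius: every complex eigenvalue has modulus at most `φ`. -/
theorem goldMat_spectral_radius (k : ℕ) (hk : 1 ≤ k) :
    (∃ w : Fin (2 ^ k) → ℝ, (∀ i, 0 < w i) ∧ (goldMat k).mulVec w = phi • w) ∧
    ((goldMat k).map (Complex.ofReal)).charpoly.IsRoot (phi : ℂ) ∧
    ∀ μ : ℂ, ((goldMat k).map (Complex.ofReal)).charpoly.IsRoot μ →
      ‖μ‖ ≤ phi := by
  have hmv := goldMat_mulVec k hk
  refine ⟨⟨gvec k, gvec_pos k, hmv⟩, ?_, ?_⟩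
  · rw [charpoly_root_iff]
    refine ⟨fun i => ((gvec k i : ℝ) : ℂ), ?_, ?_⟩
    · intro h
      have := congrFun h ⟨0, Nat.pow_pos (by norm_num)⟩
      simp only [Pi.zero_apply, Complex.ofReal_eq_zero] at this
      exact (gvec_pos k _).ne' this
    · funext i
      have hi := congrFun hmv i
      simp only [Matrix.mulVec, dotProduct, Pi.smul_apply, smul_eq_mul] at hi ⊢
      simp only [Matrix.map_apply]
      rw [show (∑ j, ((goldMat k i j : ℝ) : ℂ) * ((gvec k j : ℝ) : ℂ))
          = ((∑ j, goldMat k i j * gvec k j : ℝ) : ℂ) by push_cast; ring]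
      rw [hi]
      push_cast [phi]
      ring
  · intro μ hroot
    rw [charpoly_root_iff] at hroot
    obtain ⟨v, hv, hmvv⟩ := hroot
    -- choose maximizing index
    have hne : (Finset.univ : Finset (Fin (2 ^ k))).Nonempty :=
      Finset.univ_nonempty (α := Fin (2 ^ k))
    obtain ⟨i, -, hmax⟩ := Finset.exists_max_image Finset.univ
      (fun j => ‖v j‖ / gvec k j) hne
    set c := ‖v i‖ / gvec k i with hc
    have hvle : ∀ j, ‖v j‖ ≤ c * gvec k j := by
      intro j
      have := hmax j (Finset.mem_univ j)
      rw [div_le_iff₀ (gvec_pos k j)] at this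
      simpa [hc] using this
    have hvi : ‖v i‖ = c * gvec k i := by
      rw [hc, div_mul_cancel₀]
      exact (gvec_pos k i).ne'
    have hcpos : 0 < c := by
      obtain ⟨j, hj⟩ : ∃ j, v j ≠ 0 := by
        by_contra h
        push_neg at h
        exact hv (funext h)
      have h1 : 0 < ‖v j‖ := by
        simpa using (norm_pos_iff.mpr hj)
      have := hvle j
      nlinarith [gvec_pos k j, gvec_pos k i]
    -- main estimate at i
    have hrow := congrFun hmvv i
    simp only [Matrix.mulVec, dotProduct, Pi.smul_apply, smul_eq_mul,
      Matrix.map_apply] at hrow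
    have hest : ‖μ‖ * (c * gvec k i) ≤ c * (phi * gvec k i) := by
      have h1 : ‖μ * v i‖ = ‖μ‖ * ‖v i‖ := norm_mul _ _
      calc ‖μ‖ * (c * gvec k i) = ‖μ * v i‖ := by rw [h1, hvi]
        _ = ‖∑ j, ((goldMat k i j : ℝ) : ℂ) * v j‖ := by rw [hrow]
        _ ≤ ∑ j, ‖((goldMat k i j : ℝ) : ℂ) * v j‖ :=
            norm_sum_le _ _
        _ = ∑ j, goldMat k i j * ‖v j‖ := by
            refine Finset.sum_congr rfl fun j _ => ?_
            rw [norm_mul, Complex.norm_of_nonneg (goldMat_nonneg k i j)]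
        _ ≤ ∑ j, goldMat k i j * (c * gvec k j) := by
            refine Finset.sum_le_sum fun j _ => ?_
            exact mul_le_mul_of_nonneg_left (hvle j) (goldMat_nonneg k i j)
        _ = c * ∑ j, goldMat k i j * gvec k j := by
            rw [Finset.mul_sum]; refine Finset.sum_congr rfl fun j _ => by ring
        _ = c * (phi * gvec k i) := by
            have := congrFun hmv i
            simp only [Matrix.mulVec, dotProduct, Pi.smul_apply, smul_eq_mul] at this
            rw [this]
    have hwc : 0 < c * gvec k i := mul_pos hcpos (gvec_pos k i)
    rw [show c * (phi * gvec k i) = phi * (c * gvec k i) by ring] at hest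
    exact le_of_mul_le_mul_right hest hwc
end

section
/- For every k ≥ 1 and every α ∈ ℤ₃: if α = Σ_{j≥0} a_j 3^j with every a_{2j} ∈ {0,1} and every a_{2j+1} = 0, then both α and (3^{2k+1}+1)·α lie in the 3-adic Cantor set Σ₃. -/
open scoped BigOperators

private lemma summ_aux' (a : ℕ → ℕ) (e : ℕ → ℕ) (he : ∀ n, n ≤ e n) :
    Summable (fun m : ℕ => (a m : ℤ_[3]) * 3 ^ (e m)) := by
  have h3 : ‖(3 : ℤ_[3])‖ = (3 : ℝ)⁻¹ := by
    simpa using PadicInt.norm_p (p := 3)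
  apply Summable.of_norm_bounded (g := fun m : ℕ => ((3 : ℝ)⁻¹) ^ m)
    (summable_geometric_of_lt_one (by norm_num) (by norm_num))
  intro m
  calc ‖(a m : ℤ_[3]) * 3 ^ (e m)‖ ≤ ‖(a m : ℤ_[3])‖ * ‖(3 : ℤ_[3]) ^ (e m)‖ := norm_mul_le _ _
    _ ≤ 1 * ‖(3 : ℤ_[3]) ^ (e m)‖ :=
      mul_le_mul_of_nonneg_right (PadicInt.norm_le_one _) (norm_nonneg _)
    _ = ((3 : ℝ)⁻¹) ^ (e m) := by rw [one_mul, norm_pow, h3]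
    _ ≤ ((3 : ℝ)⁻¹) ^ m :=
      pow_le_pow_of_le_one (by norm_num) (by norm_num) (he m)

private lemma summ_aux (a : ℕ → ℕ) :
    Summable (fun m : ℕ => (a m : ℤ_[3]) * 3 ^ m) :=
  summ_aux' a id fun _ => le_rfl

private lemma reindex_aux (b : ℕ → ℕ) (g : ℕ → ℕ) (hg : Function.Injective g)
    (a : ℕ → ℕ) (h1 : ∀ n, a (g n) = b n) (h2 : ∀ m, m ∉ Set.range g → a m = 0) :
    ∑' n : ℕ, (b n : ℤ_[3]) * 3 ^ (g n) = ∑' m : ℕ, (a m : ℤ_[3]) * 3 ^ m := by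
  rw [← hg.tsum_eq (f := fun m : ℕ => (a m : ℤ_[3]) * 3 ^ m) ?_]
  · exact tsum_congr fun n => by rw [h1]
  · intro m hm
    by_contra hmr
    exact hm (by simp [h2 m hmr])

theorem Y_subset_C1_N_odd (k : ℕ) (hk : 1 ≤ k) (α : ℤ_[3])
    (hα : ∃ b : ℕ → ℕ, (∀ n, b n ≤ 1) ∧ α = ∑' n : ℕ, (b n : ℤ_[3]) * 3 ^ (2 * n)) :
    α ∈ Sigma3 ∧ ((3 : ℤ_[3]) ^ (2 * k + 1) + 1) * α ∈ Sigma3 := by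
  obtain ⟨b, hb, hab⟩ := hα
  set c := 2 * k + 1 with hc
  set a1 : ℕ → ℕ := fun m => if m % 2 = 0 then b (m / 2) else 0 with ha1
  set a2 : ℕ → ℕ := fun m => if m % 2 = 1 ∧ c ≤ m then b ((m - c) / 2) else 0 with ha2
  have ha1le : ∀ m, a1 m ≤ 1 := by
    intro m; simp only [ha1]; split <;> simp [hb]
  have ha2le : ∀ m, a2 m ≤ 1 := by
    intro m; simp only [ha2]; split <;> simp [hb]
  have hsum1 : ∑' n : ℕ, (b n : ℤ_[3]) * 3 ^ (2 * n) = ∑' m : ℕ, (a1 m : ℤ_[3]) * 3 ^ m := by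
    apply reindex_aux b (fun n => 2 * n) (fun x y h => by simp only at h; omega)
    · intro n
      simp only [ha1]
      rw [if_pos (by omega : 2 * n % 2 = 0)]
      congr 1
      omega
    · intro m hm
      have hmod : ¬ (m % 2 = 0) := by
        intro h
        exact hm ⟨m / 2, by simp only; omega⟩
      simp [ha1, hmod]
  have hsum2 : ∑' n : ℕ, (b n : ℤ_[3]) * 3 ^ (2 * n + c) = ∑' m : ℕ, (a2 m : ℤ_[3]) * 3 ^ m := by
    apply reindex_aux b (fun n => 2 * n + c) (fun x y h => by simp only at h; omega)
    · intro n
      simp only [ha2]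
      rw [if_pos ⟨by omega, by omega⟩]
      congr 1
      omega
    · intro m hm
      have hmod : ¬ (m % 2 = 1 ∧ c ≤ m) := by
        rintro ⟨h1, h2⟩
        refine hm ⟨(m - c) / 2, ?_⟩
        simp only
        omega
      simp [ha2, hmod]
  constructor
  · exact ⟨a1, ha1le, by rw [hab, hsum1]⟩
  · refine ⟨fun m => a1 m + a2 m, ?_, ?_⟩
    · intro m
      rcases Nat.even_or_odd m with h | h
      · rw [Nat.even_iff] at h
        have h2 : a2 m = 0 := by
          simp only [ha2]; rw [if_neg]; rintro ⟨h1, -⟩; omega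
        simpa [h2] using ha1le m
      · rw [Nat.odd_iff] at h
        have h1 : a1 m = 0 := by
          simp only [ha1]; rw [if_neg]; omega
        simpa [h1] using ha2le m
    · have hS1 : Summable (fun m : ℕ => (a1 m : ℤ_[3]) * 3 ^ m) := summ_aux a1
      have hS2 : Summable (fun m : ℕ => (a2 m : ℤ_[3]) * 3 ^ m) := summ_aux a2
      have expand : ((3 : ℤ_[3]) ^ c + 1) * α
          = ∑' n : ℕ, (b n : ℤ_[3]) * 3 ^ (2 * n + c) + ∑' n : ℕ, (b n : ℤ_[3]) * 3 ^ (2 * n) := by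
        have hSb : Summable (fun n : ℕ => (b n : ℤ_[3]) * 3 ^ (2 * n)) :=
          summ_aux' b (fun n => 2 * n) (fun n => by omega)
        rw [hab, add_mul, one_mul, ← hSb.tsum_mul_left ((3 : ℤ_[3]) ^ c)]
        congr 1
        exact tsum_congr fun n => by rw [pow_add]; ring
      rw [expand, hsum1, hsum2, ← Summable.tsum_add hS2 hS1]
      exact tsum_congr fun m => by push_cast; ring
end

section
/- The set {λ ∈ Σ₃ : (3^{2k+1}+1)·λ ∈ Σ₃ for all k ≥ 0} has Hausdorff dimension at least (1/2)·(log 2 / log 3). -/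
open scoped BigOperators ENNReal NNReal

namespace Sigma3Aux

/-- bit as a natural number -/
def bitn (b : ℕ → Bool) (j : ℕ) : ℕ := if b j then 1 else 0

lemma bitn_le_one (b : ℕ → Bool) (j : ℕ) : bitn b j ≤ 1 := by
  unfold bitn; split <;> norm_num

/-- generic summability of digit-type series in ℤ_[3] -/
lemma summable_digit (c : ℕ → ℤ_[3]) (e : ℕ → ℕ) (he : ∀ n, n ≤ e n) :
    Summable fun n => c n * 3 ^ e n := by
  apply Summable.of_norm_bounded (g := fun n => (1/3 : ℝ) ^ n)
    (summable_geometric_of_lt_one (by norm_num) (by norm_num))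
  intro n
  have h1 : ‖c n * 3 ^ e n‖ = ‖c n‖ * ‖(3 : ℤ_[3]) ^ e n‖ := norm_mul _ _
  have h2 : ‖(3 : ℤ_[3]) ^ e n‖ = (1/3 : ℝ) ^ e n := by
    have : ((3 : ℕ) : ℤ_[3]) = (3 : ℤ_[3]) := by norm_num
    rw [← this, PadicInt.norm_p_pow (p := 3)]
    rw [zpow_neg, zpow_natCast]
    push_cast
    rw [one_div, inv_pow]
  calc ‖c n * 3 ^ e n‖ = ‖c n‖ * (1/3 : ℝ) ^ e n := by rw [h1, h2]
    _ ≤ 1 * (1/3 : ℝ) ^ e n := by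
        apply mul_le_mul_of_nonneg_right (PadicInt.norm_le_one _) (by positivity)
    _ = (1/3 : ℝ) ^ e n := one_mul _
    _ ≤ (1/3 : ℝ) ^ n := pow_le_pow_of_le_one (by norm_num) (by norm_num) (he n)

/-- the 3-adic encoding map -/
noncomputable def gmap (b : ℕ → Bool) : ℤ_[3] :=
  ∑' j : ℕ, ((bitn b j : ℤ_[3])) * 3 ^ (2 * j)

lemma hasSum_gmap (b : ℕ → Bool) :
    HasSum (fun j => ((bitn b j : ℤ_[3])) * 3 ^ (2 * j)) (gmap b) :=
  (summable_digit _ _ (by intro n; omega)).hasSum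

/-- the real encoding map -/
noncomputable def rmap (b : ℕ → Bool) : ℝ :=
  ∑' j : ℕ, (bitn b j : ℝ) * (1/2) ^ (j + 1)

lemma summable_rmap (b : ℕ → Bool) :
    Summable fun j => (bitn b j : ℝ) * (1/2 : ℝ) ^ (j + 1) := by
  apply Summable.of_norm_bounded (g := fun n => (1/2 : ℝ) ^ n)
    (summable_geometric_of_lt_one (by norm_num) (by norm_num))
  intro n
  rw [Real.norm_eq_abs, abs_mul, abs_of_nonneg (by positivity : (0:ℝ) ≤ (bitn b n : ℝ)),
    abs_of_nonneg (by positivity : (0:ℝ) ≤ (1/2:ℝ)^(n+1))]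
  calc (bitn b n : ℝ) * (1/2:ℝ)^(n+1) ≤ 1 * (1/2:ℝ)^(n+1) := by
        apply mul_le_mul_of_nonneg_right _ (by positivity)
        exact_mod_cast bitn_le_one b n
    _ ≤ (1/2:ℝ)^n := by
        rw [one_mul]
        exact pow_le_pow_of_le_one (by norm_num) (by norm_num) (by omega)

lemma hasSum_rmap (b : ℕ → Bool) :
    HasSum (fun j => (bitn b j : ℝ) * (1/2) ^ (j + 1)) (rmap b) :=
  (summable_rmap b).hasSum

lemma gmap_mem_sigma3 (b : ℕ → Bool) : gmap b ∈ Sigma3 := by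
  refine ⟨fun n => if n % 2 = 0 then bitn b (n / 2) else 0, fun n => ?_, ?_⟩
  · dsimp only
    split
    · exact bitn_le_one _ _
    · norm_num
  · symm
    apply HasSum.tsum_eq
    set f : ℕ → ℤ_[3] := fun n =>
      (((if n % 2 = 0 then bitn b (n / 2) else 0 : ℕ)) : ℤ_[3]) * 3 ^ n with hf
    have hinj : Function.Injective (fun j : ℕ => 2 * j) := fun a b h => by
        change 2 * a = 2 * b at h; omega
    have hsupp : ∀ n ∉ Set.range (fun j : ℕ => 2 * j), f n = 0 := by
      intro n hn
      have : n % 2 ≠ 0 := by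
        intro h; exact hn ⟨n / 2, show 2 * (n / 2) = n by omega⟩
      simp [hf, this]
    rw [← hinj.hasSum_iff hsupp]
    have : (f ∘ fun j : ℕ => 2 * j) = fun j => ((bitn b j : ℤ_[3])) * 3 ^ (2 * j) := by
      funext j
      simp only [hf, Function.comp_apply]
      norm_num [Nat.mul_div_cancel_left]
    rw [this]
    exact hasSum_gmap b

lemma mul_gmap_mem_sigma3 (b : ℕ → Bool) (k : ℕ) :
    ((3 : ℤ_[3]) ^ (2 * k + 1) + 1) * gmap b ∈ Sigma3 := by
  refine ⟨fun n => if n % 2 = 0 then bitn b (n / 2)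
      else if 2 * k + 1 ≤ n then bitn b ((n - (2 * k + 1)) / 2) else 0, fun n => ?_, ?_⟩
  · dsimp only
    split
    · exact bitn_le_one _ _
    · split
      · exact bitn_le_one _ _
      · norm_num
  · symm
    apply HasSum.tsum_eq
    set u : ℕ → ℤ_[3] := fun n =>
      (((if n % 2 = 0 then bitn b (n / 2) else 0 : ℕ)) : ℤ_[3]) * 3 ^ n with hu
    set v : ℕ → ℤ_[3] := fun n =>
      (((if n % 2 = 1 ∧ 2 * k + 1 ≤ n then bitn b ((n - (2 * k + 1)) / 2) else 0 : ℕ)) : ℤ_[3])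
        * 3 ^ n with hv
    have hfu : (fun n => (((if n % 2 = 0 then bitn b (n / 2)
        else if 2 * k + 1 ≤ n then bitn b ((n - (2 * k + 1)) / 2) else 0 : ℕ)) : ℤ_[3]) * 3 ^ n)
        = fun n => u n + v n := by
      funext n
      rcases Nat.even_or_odd n with h | h
      · have h0 : n % 2 = 0 := Nat.even_iff.mp h
        simp [hu, hv, h0]
      · have h1 : n % 2 = 1 := Nat.odd_iff.mp h
        have h0 : n % 2 ≠ 0 := by omega
        by_cases hk : 2 * k + 1 ≤ n
        · simp [hu, hv, h1, h0, hk, add_mul]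
          intro h; exfalso; omega
        · simp [hu, hv, h1, h0, hk]
          intro h; exfalso; omega
    rw [hfu]
    have hSu : HasSum u (gmap b) := by
      have hinj : Function.Injective (fun j : ℕ => 2 * j) := fun a b h => by
        change 2 * a = 2 * b at h; omega
      have hsupp : ∀ n ∉ Set.range (fun j : ℕ => 2 * j), u n = 0 := by
        intro n hn
        have : n % 2 ≠ 0 := by intro h; exact hn ⟨n / 2, show 2 * (n / 2) = n by omega⟩
        simp [hu, this]
      rw [← hinj.hasSum_iff hsupp]
      have : (u ∘ fun j : ℕ => 2 * j) = fun j => ((bitn b j : ℤ_[3])) * 3 ^ (2 * j) := by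
        funext j
        simp only [hu, Function.comp_apply]
        norm_num [Nat.mul_div_cancel_left]
      rw [this]
      exact hasSum_gmap b
    have hSv : HasSum v ((3 : ℤ_[3]) ^ (2 * k + 1) * gmap b) := by
      have hinj : Function.Injective (fun j : ℕ => 2 * j + (2 * k + 1)) := fun a b h => by
        change 2 * a + (2 * k + 1) = 2 * b + (2 * k + 1) at h; omega
      have hsupp : ∀ n ∉ Set.range (fun j : ℕ => 2 * j + (2 * k + 1)), v n = 0 := by
        intro n hn
        have : ¬(n % 2 = 1 ∧ 2 * k + 1 ≤ n) := by
          intro ⟨h1, h2⟩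
          exact hn ⟨(n - (2 * k + 1)) / 2, show 2 * ((n - (2 * k + 1)) / 2) + (2 * k + 1) = n by omega⟩
        simp [hv, this]
        intro h1 h2; exact absurd ⟨h1, by omega⟩ this
      rw [← hinj.hasSum_iff hsupp]
      have : (v ∘ fun j : ℕ => 2 * j + (2 * k + 1))
          = fun j => (3 : ℤ_[3]) ^ (2 * k + 1) * (((bitn b j : ℤ_[3])) * 3 ^ (2 * j)) := by
        funext j
        have h1 : (2 * j + (2 * k + 1)) % 2 = 1 := by omega
        have h2 : 2 * k + 1 ≤ 2 * j + (2 * k + 1) := by omega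
        have h3 : (2 * j + (2 * k + 1) - (2 * k + 1)) / 2 = j := by omega
        simp only [hv, Function.comp_apply, h1, h2, h3, and_true, if_true]
        ring
      rw [this]
      exact (hasSum_gmap b).mul_left _
    have := hSu.add hSv
    convert this using 1
    ring

/-- the key exact-norm lemma -/
lemma norm_gmap_sub (b c : ℕ → Bool) (j₀ : ℕ) (hne : b j₀ ≠ c j₀)
    (hmin : ∀ j < j₀, b j = c j) :
    ‖gmap b - gmap c‖ = (1/3 : ℝ) ^ (2 * j₀) := by
  set δ : ℕ → ℤ_[3] := fun j => ((bitn b j : ℤ_[3]) - (bitn c j : ℤ_[3])) * 3 ^ (2 * j) with hδ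
  have hS : HasSum δ (gmap b - gmap c) := by
    have := (hasSum_gmap b).sub (hasSum_gmap c)
    convert this using 1
    · rfl
    funext j
    simp only [hδ]
    ring
  have hzero : ∀ j < j₀, δ j = 0 := by
    intro j hj
    simp [hδ, bitn, hmin j hj]
  -- shift by j₀
  have hS0 : HasSum (fun i => δ (i + j₀)) (gmap b - gmap c) := by
    rw [hasSum_nat_add_iff (f := δ) j₀]
    have : ∑ i ∈ Finset.range j₀, δ i = 0 :=
      Finset.sum_eq_zero fun i hi => hzero i (Finset.mem_range.mp hi)
    rw [this, add_zero]
    exact hS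
  -- peel off the first term
  have hS1 : HasSum (fun i => δ (i + 1 + j₀)) ((gmap b - gmap c) - δ j₀) := by
    have h2 : HasSum (fun n : ℕ => δ (n + 1 + j₀)) ((gmap b - gmap c) - δ j₀) ↔
        HasSum (fun i => δ (i + j₀)) (((gmap b - gmap c) - δ j₀) + ∑ i ∈ Finset.range 1, δ (i + j₀)) :=
      hasSum_nat_add_iff (f := fun i => δ (i + j₀)) 1
    rw [h2]
    simp only [Finset.range_one, Finset.sum_singleton, Nat.zero_add]
    convert hS0 using 1
    ring
  set t : ℤ_[3] := (gmap b - gmap c) - δ j₀ with ht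
  have hnd : ‖δ j₀‖ = (1/3 : ℝ) ^ (2 * j₀) := by
    have hpow : ‖(3 : ℤ_[3]) ^ (2 * j₀)‖ = (1/3 : ℝ) ^ (2 * j₀) := by
      have : ((3 : ℕ) : ℤ_[3]) = (3 : ℤ_[3]) := by norm_num
      rw [← this, PadicInt.norm_p_pow (p := 3), zpow_neg, zpow_natCast]
      push_cast
      rw [one_div, inv_pow]
    have hcoef : ‖((bitn b j₀ : ℤ_[3]) - (bitn c j₀ : ℤ_[3]))‖ = 1 := by
      rcases Bool.eq_false_or_eq_true (b j₀) with hb | hb <;>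
        rcases Bool.eq_false_or_eq_true (c j₀) with hc | hc <;>
          simp [bitn, hb, hc] at hne ⊢
    rw [hδ]
    simp only []
    rw [norm_mul, hcoef, one_mul, hpow]
  have hnt : ‖t‖ < (1/3 : ℝ) ^ (2 * j₀) := by
    have hgeo : HasSum (fun i : ℕ => (1/3 : ℝ) ^ (2 * j₀ + 2) * (1/3 : ℝ) ^ i)
        ((1/3 : ℝ) ^ (2 * j₀ + 2) * (1 - 1/3)⁻¹) :=
      (hasSum_geometric_of_lt_one (by norm_num) (by norm_num)).mul_left _
    have hbound : ∀ i : ℕ, ‖δ (i + 1 + j₀)‖ ≤ (1/3 : ℝ) ^ (2 * j₀ + 2) * (1/3 : ℝ) ^ i := by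
      intro i
      have h1 : ‖δ (i + 1 + j₀)‖ ≤ (1/3 : ℝ) ^ (2 * (i + 1 + j₀)) := by
        rw [hδ]
        simp only []
        rw [norm_mul]
        have hpow : ‖(3 : ℤ_[3]) ^ (2 * (i + 1 + j₀))‖ = (1/3 : ℝ) ^ (2 * (i + 1 + j₀)) := by
          have : ((3 : ℕ) : ℤ_[3]) = (3 : ℤ_[3]) := by norm_num
          rw [← this, PadicInt.norm_p_pow (p := 3), zpow_neg, zpow_natCast]
          push_cast
          rw [one_div, inv_pow]
        rw [hpow]
        exact mul_le_of_le_one_left (by positivity) (PadicInt.norm_le_one _)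
      refine h1.trans ?_
      rw [← pow_add]
      apply pow_le_pow_of_le_one (by norm_num) (by norm_num)
      omega
    have h2 : ‖t‖ ≤ (1/3 : ℝ) ^ (2 * j₀ + 2) * (1 - 1/3)⁻¹ :=
      hS1.norm_le_of_bounded hgeo hbound
    refine lt_of_le_of_lt h2 ?_
    rw [pow_add]
    have hp : (0:ℝ) < (1/3 : ℝ) ^ (2 * j₀) := by positivity
    nlinarith
  have hsplit : gmap b - gmap c = δ j₀ + t := by rw [ht]; ring
  rw [hsplit, PadicInt.norm_add_eq_max_of_ne (by rw [hnd]; exact fun h => absurd h.symm hnt.ne),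
    max_eq_left (by rw [hnd]; exact hnt.le), hnd]

lemma gmap_injective : Function.Injective gmap := by
  intro b c h
  by_contra hbc
  have hex : ∃ j, b j ≠ c j := by
    by_contra hall
    push_neg at hall
    exact hbc (funext hall)
  set j₀ := Nat.find hex with hj₀
  have h1 := norm_gmap_sub b c j₀ (Nat.find_spec hex)
    (fun j hj => by_contra fun hne => Nat.find_min hex hj hne)
  rw [h, sub_self, norm_zero] at h1
  have : (0:ℝ) < (1/3 : ℝ) ^ (2 * j₀) := by positivity
  linarith [h1 ▸ this]

lemma rmap_sub_le (b c : ℕ → Bool) (j₀ : ℕ) (hmin : ∀ j < j₀, b j = c j) :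
    |rmap b - rmap c| ≤ (1/2 : ℝ) ^ j₀ := by
  set ε : ℕ → ℝ := fun j => ((bitn b j : ℝ) - (bitn c j : ℝ)) * (1/2) ^ (j + 1) with hε
  have hS : HasSum ε (rmap b - rmap c) := by
    have := (hasSum_rmap b).sub (hasSum_rmap c)
    convert this using 1
    · rfl
    funext j
    simp only [hε]
    ring
  have hzero : ∀ j < j₀, ε j = 0 := by
    intro j hj; simp [hε, bitn, hmin j hj]
  have hS0 : HasSum (fun i => ε (i + j₀)) (rmap b - rmap c) := by
    rw [hasSum_nat_add_iff (f := ε) j₀]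
    have : ∑ i ∈ Finset.range j₀, ε i = 0 :=
      Finset.sum_eq_zero fun i hi => hzero i (Finset.mem_range.mp hi)
    rw [this, add_zero]
    exact hS
  have hbound : ∀ i : ℕ, ‖ε (i + j₀)‖ ≤ (1/2 : ℝ) ^ (j₀ + 1) * (1/2 : ℝ) ^ i := by
    intro i
    rw [hε]
    simp only []
    rw [Real.norm_eq_abs, abs_mul, abs_of_nonneg (by positivity : (0:ℝ) ≤ (1/2:ℝ) ^ (i + j₀ + 1))]
    have h1 : |(bitn b (i + j₀) : ℝ) - (bitn c (i + j₀) : ℝ)| ≤ 1 := by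
      rcases Bool.eq_false_or_eq_true (b (i + j₀)) with hb | hb <;>
        rcases Bool.eq_false_or_eq_true (c (i + j₀)) with hc | hc <;>
          simp [bitn, hb, hc]
    calc |(bitn b (i + j₀) : ℝ) - (bitn c (i + j₀) : ℝ)| * (1/2:ℝ) ^ (i + j₀ + 1)
        ≤ 1 * (1/2:ℝ) ^ (i + j₀ + 1) := mul_le_mul_of_nonneg_right h1 (by positivity)
      _ = (1/2 : ℝ) ^ (j₀ + 1) * (1/2 : ℝ) ^ i := by rw [one_mul, ← pow_add]; ring_nf
  have hgeo : HasSum (fun i : ℕ => (1/2 : ℝ) ^ (j₀ + 1) * (1/2 : ℝ) ^ i)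
      ((1/2 : ℝ) ^ (j₀ + 1) * (1 - 1/2)⁻¹) :=
    (hasSum_geometric_of_lt_one (by norm_num) (by norm_num)).mul_left _
  have h2 : ‖rmap b - rmap c‖ ≤ (1/2 : ℝ) ^ (j₀ + 1) * (1 - 1/2)⁻¹ :=
    hS0.norm_le_of_bounded hgeo hbound
  rw [Real.norm_eq_abs] at h2
  refine h2.trans (le_of_eq ?_)
  rw [pow_succ]
  norm_num
  ring

lemma rmap_one : rmap (fun _ => true) = 1 := by
  have h : HasSum (fun j : ℕ => (bitn (fun _ => true) j : ℝ) * (1/2) ^ (j + 1)) 1 := by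
    have h0 := hasSum_geometric_two' 1
    convert h0 using 2 with j
    simp [bitn, pow_succ, one_div, inv_pow]
    ring
  exact h.tsum_eq

lemma floor_double (x : ℝ) : ⌊2 * x⌋ = 2 * ⌊x⌋ ∨ ⌊2 * x⌋ = 2 * ⌊x⌋ + 1 := by
  have h1 : (2 * ⌊x⌋ : ℤ) ≤ ⌊2 * x⌋ := by
    apply Int.le_floor.mpr
    push_cast
    linarith [Int.floor_le x]
  have h2 : ⌊2 * x⌋ < 2 * ⌊x⌋ + 2 := by
    apply Int.floor_lt.mpr
    push_cast
    linarith [Int.lt_floor_add_one x]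
  omega

lemma rmap_surjOn : ∀ t ∈ Set.Icc (0:ℝ) 1, ∃ b : ℕ → Bool, rmap b = t := by
  rintro t ⟨ht0, ht1⟩
  rcases eq_or_lt_of_le ht1 with rfl | ht1
  · exact ⟨fun _ => true, rmap_one⟩
  · set b : ℕ → Bool := fun j => decide (⌊t * 2 ^ (j+1)⌋ % 2 = 1) with hb
    have key : ∀ m : ℕ, ∑ j ∈ Finset.range m, (bitn b j : ℝ) * (1/2)^(j+1)
        = (⌊t * 2 ^ m⌋ : ℝ) / 2 ^ m := by
      intro m
      induction m with
      | zero =>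
        have hfl : ⌊t⌋ = 0 := Int.floor_eq_zero_iff.mpr ⟨ht0, ht1⟩
        simp [hfl]
      | succ m ih =>
        rw [Finset.sum_range_succ, ih]
        have hd : ⌊t * 2 ^ (m+1)⌋ = 2 * ⌊t * 2 ^ m⌋ ∨ ⌊t * 2 ^ (m+1)⌋ = 2 * ⌊t * 2 ^ m⌋ + 1 := by
          have h := floor_double (t * 2 ^ m)
          rw [show 2 * (t * 2 ^ m) = t * 2 ^ (m+1) by ring] at h
          exact h
        have hpm : (2:ℝ) ^ (m+1) ≠ 0 := by positivity
        rcases hd with hd | hd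
        · have hb0 : b m = false := by
            simp only [hb, decide_eq_false_iff_not]
            omega
          have : (bitn b m : ℝ) = 0 := by simp [bitn, hb0]
          rw [this]
          rw [hd]
          push_cast
          field_simp
          ring
        · have hb1 : b m = true := by
            simp only [hb, decide_eq_true_eq]
            omega
          have : (bitn b m : ℝ) = 1 := by simp [bitn, hb1]
          rw [this]
          rw [hd]
          push_cast
          field_simp
          rw [show (2:ℝ)^m * (1/2)^(m+1) = 1/2 by rw [pow_succ, ← mul_assoc, ← mul_pow]; norm_num]
          ring
    have hlim : Filter.Tendsto (fun m : ℕ => (⌊t * 2 ^ m⌋ : ℝ) / 2 ^ m)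
        Filter.atTop (nhds t) := by
      have hup : ∀ m : ℕ, (⌊t * 2 ^ m⌋ : ℝ) / 2 ^ m ≤ t := by
        intro m
        rw [div_le_iff₀ (by positivity)]
        exact Int.floor_le (t * 2 ^ m)
      have hlo : ∀ m : ℕ, t - (1/2:ℝ)^m ≤ (⌊t * 2 ^ m⌋ : ℝ) / 2 ^ m := by
        intro m
        rw [le_div_iff₀ (by positivity)]
        have h1 := Int.lt_floor_add_one (t * 2 ^ m)
        have h2 : (1/2:ℝ)^m * 2^m = 1 := by
          rw [one_div, inv_pow]
          field_simp
        nlinarith [pow_pos (by norm_num : (0:ℝ) < 2) m]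
      refine tendsto_of_tendsto_of_tendsto_of_le_of_le ?_ tendsto_const_nhds hlo hup
      have := (tendsto_const_nhds (x := t) (f := Filter.atTop (α := ℕ))).sub
        (tendsto_pow_atTop_nhds_zero_of_lt_one (by norm_num : (0:ℝ) ≤ 1/2) (by norm_num))
      simpa using this
    have hS : HasSum (fun j => (bitn b j : ℝ) * (1/2)^(j+1)) t := by
      rw [(summable_rmap b).hasSum_iff_tendsto_nat]
      have heq : (fun m : ℕ => ∑ j ∈ Finset.range m, (bitn b j:ℝ)*(1/2)^(j+1))
          = fun m => (⌊t*2^m⌋:ℝ)/2^m := funext key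
      rw [heq]
      exact hlim
    exact ⟨b, hS.tsum_eq⟩

noncomputable def hmap : ℤ_[3] → ℝ := Function.extend gmap rmap 0

lemma hmap_gmap (b : ℕ → Bool) : hmap (gmap b) = rmap b :=
  gmap_injective.extend_apply rmap 0 b

/-- the Hölder exponent -/
noncomputable def alpha : ℝ := (1/2) * (Real.log 2 / Real.log 3)

lemma alpha_pos : 0 < alpha := by
  have h2 : 0 < Real.log 2 := Real.log_pos (by norm_num)
  have h3 : 0 < Real.log 3 := Real.log_pos (by norm_num)
  unfold alpha
  positivity

/-- the key rpow computation -/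
lemma rpow_alpha (j : ℕ) : ((1/3 : ℝ) ^ (2 * j)) ^ alpha = (1/2 : ℝ) ^ j := by
  have h3 : (0:ℝ) < 1/3 := by norm_num
  have hl3 : Real.log 3 ≠ 0 := ne_of_gt (Real.log_pos (by norm_num))
  rw [← Real.rpow_natCast (1/3 : ℝ) (2 * j), ← Real.rpow_mul (le_of_lt h3),
    ← Real.rpow_natCast (1/2 : ℝ) j]
  rw [Real.rpow_def_of_pos h3, Real.rpow_def_of_pos (by norm_num : (0:ℝ) < 1/2)]
  congr 1
  rw [Real.log_div (by norm_num) (by norm_num), Real.log_div (by norm_num) (by norm_num),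
    Real.log_one]
  unfold alpha
  push_cast
  field_simp
  ring

/-- the exponent as a nonnegative real -/
noncomputable def alphaNN : NNReal := ⟨alpha, alpha_pos.le⟩

lemma alphaNN_pos : 0 < alphaNN := by
  rw [← NNReal.coe_pos]
  exact alpha_pos

lemma holder_hmap : HolderOnWith 1 alphaNN hmap (Set.range gmap) := by
  rintro x ⟨b, rfl⟩ y ⟨c, rfl⟩
  rcases eq_or_ne b c with rfl | hbc
  · simp
  · have hex : ∃ j, b j ≠ c j := by
      by_contra hall
      push_neg at hall
      exact hbc (funext hall)
    set j₀ := Nat.find hex with hj₀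
    have hne : b j₀ ≠ c j₀ := Nat.find_spec hex
    have hmin : ∀ j < j₀, b j = c j := fun j hj => by_contra fun h => Nat.find_min hex hj h
    have hnorm : ‖gmap b - gmap c‖ = (1/3 : ℝ) ^ (2 * j₀) := norm_gmap_sub b c j₀ hne hmin
    have hr : |rmap b - rmap c| ≤ (1/2 : ℝ) ^ j₀ := rmap_sub_le b c j₀ hmin
    rw [hmap_gmap, hmap_gmap]
    rw [edist_dist, edist_dist, Real.dist_eq, dist_eq_norm, hnorm]
    rw [ENNReal.coe_one, one_mul]
    have hpos : (0:ℝ) < (1/3 : ℝ) ^ (2 * j₀) := by positivity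
    rw [ENNReal.ofReal_rpow_of_pos hpos]
    apply ENNReal.ofReal_le_ofReal
    calc |rmap b - rmap c| ≤ (1/2 : ℝ) ^ j₀ := hr
      _ = ((1/3 : ℝ) ^ (2 * j₀)) ^ alpha := (rpow_alpha j₀).symm
      _ = ((1/3 : ℝ) ^ (2 * j₀)) ^ ((alphaNN : NNReal) : ℝ) := rfl

lemma range_gmap_subset :
    Set.range gmap ⊆ {l : ℤ_[3] | l ∈ Sigma3 ∧
      ∀ k : ℕ, ((3 : ℤ_[3]) ^ (2 * k + 1) + 1) * l ∈ Sigma3} := by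
  rintro x ⟨b, rfl⟩
  exact ⟨gmap_mem_sigma3 b, fun k => mul_gmap_mem_sigma3 b k⟩

end Sigma3Aux

theorem dimH_lower_bound_intersection :
    ENNReal.ofReal ((1 / 2) * (Real.log 2 / Real.log 3)) ≤
      dimH {l : ℤ_[3] | l ∈ Sigma3 ∧
        ∀ k : ℕ, ((3 : ℤ_[3]) ^ (2 * k + 1) + 1) * l ∈ Sigma3} := by
  classical
  have halpha : ENNReal.ofReal ((1 / 2) * (Real.log 2 / Real.log 3))
      = (Sigma3Aux.alphaNN : ℝ≥0∞) := by
    have hx : (0:ℝ) ≤ (1 / 2) * (Real.log 2 / Real.log 3) := Sigma3Aux.alpha_pos.le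
    rw [ENNReal.ofReal]
    congr 1
    apply NNReal.coe_injective
    rw [Real.coe_toNNReal _ hx]
    rfl
  rw [halpha]
  have hαpos : 0 < Sigma3Aux.alphaNN := Sigma3Aux.alphaNN_pos
  have himg : Set.Icc (0:ℝ) 1 ⊆ Sigma3Aux.hmap '' (Set.range Sigma3Aux.gmap) := by
    intro t ht
    obtain ⟨b, hb⟩ := Sigma3Aux.rmap_surjOn t ht
    exact ⟨Sigma3Aux.gmap b, ⟨b, rfl⟩, by rw [Sigma3Aux.hmap_gmap, hb]⟩
  have h1 : (1 : ℝ≥0∞) ≤ dimH (Sigma3Aux.hmap '' (Set.range Sigma3Aux.gmap)) := by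
    refine le_trans ?_ (dimH_mono himg)
    have hdim : dimH (Set.Icc (0:ℝ) 1) = 1 := by
      have hmem : Set.Icc (0:ℝ) 1 ∈ nhds (1/2 : ℝ) :=
        Icc_mem_nhds (by norm_num) (by norm_num)
      rw [Real.dimH_of_mem_nhds hmem]
      simp
    rw [hdim]
  have h2 : dimH (Sigma3Aux.hmap '' (Set.range Sigma3Aux.gmap))
      ≤ dimH (Set.range Sigma3Aux.gmap) / (Sigma3Aux.alphaNN : ℝ≥0∞) :=
    Sigma3Aux.holder_hmap.dimH_image_le hαpos
  have h3 : (Sigma3Aux.alphaNN : ℝ≥0∞)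
      ≤ dimH (Set.range Sigma3Aux.gmap) := by
    have hle := le_trans h1 h2
    calc (Sigma3Aux.alphaNN : ℝ≥0∞)
        = _ * 1 := (mul_one _).symm
      _ ≤ _ * (dimH (Set.range Sigma3Aux.gmap)
            / (Sigma3Aux.alphaNN : ℝ≥0∞)) := mul_le_mul_right hle _
      _ = dimH (Set.range Sigma3Aux.gmap) :=
          ENNReal.mul_div_cancel (by exact_mod_cast hαpos.ne') ENNReal.coe_ne_top
  exact h3.trans (dimH_mono Sigma3Aux.range_gmap_subset)
end

section
/- Let λ ∈ ℤ₃ be of the form λ = Σ_{j=1}^∞ 3^{ℓ₁+⋯+ℓ_j} where each gap ℓ_j ≥ m+1 for a fixed m ≥ 1 (finite sums allowed). Then for every 1 ≤ k ≤ m, (3^k + 1)·λ ∈ Σ₃. -/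
open scoped BigOperators

lemma summable_digits (c : ℕ → ℕ) : Summable (fun n => (c n : ℤ_[3]) * 3 ^ n) := by
  apply Summable.of_norm_bounded (g := fun n => ((3:ℝ)⁻¹) ^ n)
  · exact summable_geometric_of_lt_one (by norm_num) (by norm_num)
  · intro n
    have h1 : ‖((c n : ℤ_[3]))‖ ≤ 1 := PadicInt.norm_le_one _
    have h3 : ‖((3:ℤ_[3]))‖ = (3:ℝ)⁻¹ := by
      have := @PadicInt.norm_p 3 _
      simpa using this
    calc ‖(c n : ℤ_[3]) * 3 ^ n‖ = ‖(c n : ℤ_[3])‖ * ‖(3:ℤ_[3])‖ ^ n := by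
          rw [norm_mul, norm_pow]
      _ ≤ 1 * ((3:ℝ)⁻¹) ^ n := by
          apply mul_le_mul h1 (le_of_eq (by rw [h3])) (by positivity) zero_le_one
      _ = ((3:ℝ)⁻¹) ^ n := one_mul _

/-- If the nonzero digit positions of `λ` are all ≥ m+1 and pairwise separated by
gaps of at least `m+1`, with all nonzero digits equal to 1, then `(3^k+1)·λ ∈ Σ₃`
for every `1 ≤ k ≤ m`. -/
theorem mul_three_pow_add_one_mem_Sigma3 (m : ℕ) (hm : 1 ≤ m) (l : ℤ_[3])
    (a : ℕ → ℕ) (ha01 : ∀ n, a n ≤ 1)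
    (hfirst : ∀ n, a n = 1 → m + 1 ≤ n)
    (hgap : ∀ i j, i < j → a i = 1 → a j = 1 → i + (m + 1) ≤ j)
    (hl : l = ∑' n : ℕ, (a n : ℤ_[3]) * 3 ^ n) :
    ∀ k : ℕ, 1 ≤ k → k ≤ m → ((3 : ℤ_[3]) ^ k + 1) * l ∈ Sigma3 := by
  intro k hk1 hkm
  -- the shifted digit sequence
  have hb01 : ∀ n, a n + (if k ≤ n then a (n - k) else 0) ≤ 1 := by
    intro n
    split_ifs with hkn
    · by_contra h
      push_neg at h
      have han : a n = 1 := by have := ha01 n; have := ha01 (n - k); omega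
      have hcn : a (n - k) = 1 := by have := ha01 n; have := ha01 (n - k); omega
      have hlt : n - k < n := by omega
      have := hgap (n - k) n hlt hcn han
      omega
    · simpa using ha01 n
  refine ⟨fun n => a n + (if k ≤ n then a (n - k) else 0), hb01, ?_⟩
  have hsa : Summable (fun n => (a n : ℤ_[3]) * 3 ^ n) := summable_digits a
  have hsc : Summable (fun n => ((if k ≤ n then a (n - k) else 0 : ℕ) : ℤ_[3]) * 3 ^ n) :=
    summable_digits _
  have hinj : Function.Injective (fun n : ℕ => n + k) := fun x y h => by
    simpa using h
  have hshift : (∑' n : ℕ, ((if k ≤ n then a (n - k) else 0 : ℕ) : ℤ_[3]) * 3 ^ n)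
      = ∑' n : ℕ, (a n : ℤ_[3]) * 3 ^ (n + k) := by
    rw [← hinj.tsum_eq]
    · apply tsum_congr
      intro n
      rw [if_pos (by omega : k ≤ n + k), Nat.add_sub_cancel]
    · intro x hx
      by_cases hxk : k ≤ x
      · exact ⟨x - k, by simp; omega⟩
      · exact absurd (by simp [hxk]) hx
  have hmul : (3 : ℤ_[3]) ^ k * l
      = ∑' n : ℕ, ((if k ≤ n then a (n - k) else 0 : ℕ) : ℤ_[3]) * 3 ^ n := by
    rw [hl, hshift, ← hsa.tsum_mul_left]
    apply tsum_congr
    intro n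
    ring
  have key : ((3 : ℤ_[3]) ^ k + 1) * l
      = (∑' n : ℕ, ((if k ≤ n then a (n - k) else 0 : ℕ) : ℤ_[3]) * 3 ^ n)
        + ∑' n : ℕ, (a n : ℤ_[3]) * 3 ^ n := by
    rw [← hmul, ← hl]; ring
  rw [key, ← Summable.tsum_add hsc hsa]
  apply tsum_congr
  intro n
  push_cast
  ring
end

section
/- The 4×4 matrix A with rows (1,1,0,0), (0,0,1,0), (0,0,1,1), (1,0,0,0) has spectral radius equal to the golden ratio (1+√5)/2. -/
/-- Adjacency matrix of the presentation of the path set underlying `C(1,7)`. -/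
def A7 : Matrix (Fin 4) (Fin 4) ℂ :=
  !![1, 1, 0, 0; 0, 0, 1, 0; 0, 0, 1, 1; 1, 0, 0, 0]

open Polynomial in
lemma A7_charpoly : A7.charpoly = X^4 - 2*X^3 + X^2 - 1 := by
  rw [Matrix.charpoly]
  simp [Matrix.det_succ_row_zero, Fin.sum_univ_succ, Matrix.charmatrix_apply, A7,
    Matrix.diagonal, Fin.succAbove]
  ring

open Polynomial in
/-- The spectral radius of `A7` is the golden ratio: `(1+√5)/2` is an eigenvalue
and every complex eigenvalue has modulus at most `(1+√5)/2`. -/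
theorem A7_spectral_radius_golden :
    A7.charpoly.IsRoot ((((1 + Real.sqrt 5) / 2 : ℝ)) : ℂ) ∧
    ∀ μ : ℂ, A7.charpoly.IsRoot μ → ‖μ‖ ≤ (1 + Real.sqrt 5) / 2 := by
  have h5 : (Real.sqrt 5 : ℝ) ^ 2 = 5 := Real.sq_sqrt (by norm_num)
  have h5' : (1:ℝ) ≤ Real.sqrt 5 := by nlinarith [Real.sqrt_nonneg 5]
  have hs : ((Real.sqrt 5 : ℝ) : ℂ) ^ 2 = 5 := by
    rw [← Complex.ofReal_pow, h5]; norm_num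
  constructor
  · rw [A7_charpoly]
    simp only [IsRoot, eval_sub, eval_add, eval_mul, eval_pow, eval_X, eval_one, eval_ofNat]
    push_cast
    linear_combination
      (((1 + ((Real.sqrt 5 : ℝ) : ℂ))/2)^2 - (1 + ((Real.sqrt 5 : ℝ) : ℂ))/2 + 1)/4 * hs
  · intro μ hμ
    rw [A7_charpoly] at hμ
    simp only [IsRoot, eval_sub, eval_add, eval_mul, eval_pow, eval_X, eval_one, eval_ofNat] at hμ
    have hfac : (μ^2 - μ - 1) * (μ^2 - μ + 1) = 0 := by linear_combination hμ
    have key : ‖μ‖ ^ 2 ≤ ‖μ‖ + 1 := by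
      rcases mul_eq_zero.1 hfac with h | h
      · have h2 : μ^2 = μ + 1 := by linear_combination h
        calc ‖μ‖ ^ 2 = ‖μ + 1‖ := by rw [← h2]; simp [map_pow]
        _ ≤ ‖μ‖ + 1 := by simpa using norm_add_le μ 1
      · have h2 : μ^2 = μ - 1 := by linear_combination h
        calc ‖μ‖ ^ 2 = ‖μ - 1‖ := by rw [← h2]; simp [map_pow]
        _ ≤ ‖μ‖ + 1 := by
            simpa using norm_sub_le μ 1
    nlinarith [norm_nonneg μ]
end
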